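/- Let D ⊆ F_2^n be a triply even binary linear code whose length n is divisible by 16 and which contains the all-one vector (1,1,…,1). Then the code C = D^⊥ satisfies: (i) C is even; (ii) every codeword of C^⊥ = D has weight divisible by 8 and C^⊥ ⊆ C; and (iii) for every α ∈ C^⊥, there exists a doubly even subcode E of C_α = {γ ∈ C : supp(γ) ⊆ supp(α)} which is self-dual with respect to α. In other words, C = D^⊥ is F-admissible. -/

import Mathlib

/-- The weight of a binary vector: the number of nonzero coordinates. -/
def wt {n : ℕ} (α : Fin n → ZMod 2) : ℕ :=
  (Finset.univ.filter (fun i => α i ≠ 0)).card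

/-- The standard bilinear form `⟨α,β⟩ = ∑ i, α i * β i` on `F_2^n`. -/
def ip {n : ℕ} (α β : Fin n → ZMod 2) : ZMod 2 := ∑ i, α i * β i

/-- The support of a binary vector. -/
def supp {n : ℕ} (α : Fin n → ZMod 2) : Set (Fin n) := {i | α i ≠ 0}

/-- The dual code of a set of vectors. -/
def dualCode {n : ℕ} (S : Set (Fin n → ZMod 2)) : Set (Fin n → ZMod 2) :=
  {δ | ∀ γ ∈ S, ip δ γ = 0}

/-- The support of a code: the union of the supports of its codewords. -/
def codeSupp {n : ℕ} (S : Set (Fin n → ZMod 2)) : Set (Fin n) := ⋃ h ∈ S, supp h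

/-- `H^{⊥_β}`: vectors with support inside `supp β` orthogonal to every element of `H`. -/
def perpWrt {n : ℕ} (β : Fin n → ZMod 2) (H : Set (Fin n → ZMod 2)) :
    Set (Fin n → ZMod 2) :=
  {δ | supp δ ⊆ supp β ∧ ∀ h ∈ H, ip δ h = 0}

/-- `H` is self-dual with respect to `β` if `supp H = supp β` and `H^{⊥_β} = H`. -/
def selfDualWrt {n : ℕ} (β : Fin n → ZMod 2) (H : Set (Fin n → ZMod 2)) : Prop :=
  codeSupp H = supp β ∧ perpWrt β H = H

open Finset
open scoped Classical

namespace Stmt6Aux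

variable {n : ℕ}

/-! ### Basic weight / inner product arithmetic -/

/-- Intersection count of two binary vectors. -/
def ic (x y : Fin n → ZMod 2) : ℕ :=
  (Finset.univ.filter (fun i => x i ≠ 0 ∧ y i ≠ 0)).card

/-- Triple intersection count. -/
def tc (x y z : Fin n → ZMod 2) : ℕ :=
  (Finset.univ.filter (fun i => x i ≠ 0 ∧ y i ≠ 0 ∧ z i ≠ 0)).card

lemma wt_eq_sum (x : Fin n → ZMod 2) :
    wt x = ∑ i, (if x i ≠ 0 then 1 else 0) := by
  simp [wt, Finset.card_filter]

lemma ic_eq_sum (x y : Fin n → ZMod 2) :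
    ic x y = ∑ i, (if x i ≠ 0 ∧ y i ≠ 0 then 1 else 0) := by
  rw [ic, Finset.card_filter]

lemma tc_eq_sum (x y z : Fin n → ZMod 2) :
    tc x y z = ∑ i, (if x i ≠ 0 ∧ y i ≠ 0 ∧ z i ≠ 0 then 1 else 0) := by
  rw [tc, Finset.card_filter]

lemma wt_add_ic (x y : Fin n → ZMod 2) :
    wt (x + y) + 2 * ic x y = wt x + wt y := by
  rw [wt_eq_sum, wt_eq_sum, wt_eq_sum, ic_eq_sum, Finset.mul_sum,
    ← Finset.sum_add_distrib, ← Finset.sum_add_distrib]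
  refine Finset.sum_congr rfl fun i _ => ?_
  have h : ∀ a b : ZMod 2, (if a + b ≠ 0 then (1:ℕ) else 0) +
      2 * (if a ≠ 0 ∧ b ≠ 0 then 1 else 0) =
      (if a ≠ 0 then 1 else 0) + (if b ≠ 0 then 1 else 0) := by decide
  simpa using h (x i) (y i)

lemma wt_add3 (x y z : Fin n → ZMod 2) :
    wt (x + y + z) + 2 * (ic x y + ic x z + ic y z) =
      wt x + wt y + wt z + 4 * tc x y z := by
  rw [wt_eq_sum, wt_eq_sum, wt_eq_sum, wt_eq_sum, ic_eq_sum, ic_eq_sum, ic_eq_sum,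
    tc_eq_sum, ← Finset.sum_add_distrib, ← Finset.sum_add_distrib, Finset.mul_sum,
    Finset.mul_sum, ← Finset.sum_add_distrib, ← Finset.sum_add_distrib,
    ← Finset.sum_add_distrib, ← Finset.sum_add_distrib]
  refine Finset.sum_congr rfl fun i _ => ?_
  have h : ∀ a b c : ZMod 2, (if a + b + c ≠ 0 then (1:ℕ) else 0) +
      2 * ((if a ≠ 0 ∧ b ≠ 0 then 1 else 0) + (if a ≠ 0 ∧ c ≠ 0 then 1 else 0) +
        (if b ≠ 0 ∧ c ≠ 0 then 1 else 0)) =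
      (if a ≠ 0 then 1 else 0) + (if b ≠ 0 then 1 else 0) + (if c ≠ 0 then 1 else 0) +
        4 * (if a ≠ 0 ∧ b ≠ 0 ∧ c ≠ 0 then 1 else 0) := by decide
  simpa using h (x i) (y i) (z i)

lemma natCast_wt (x : Fin n → ZMod 2) : ((wt x : ℕ) : ZMod 2) = ∑ i, x i := by
  rw [wt_eq_sum]
  push_cast
  refine Finset.sum_congr rfl fun i _ => ?_
  have h : ∀ a : ZMod 2, (if a ≠ 0 then (1 : ZMod 2) else 0) = a := by decide
  exact h (x i)

lemma ip_eq_ic (x y : Fin n → ZMod 2) : ip x y = ((ic x y : ℕ) : ZMod 2) := by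
  rw [ic_eq_sum]
  push_cast
  refine Finset.sum_congr rfl fun i _ => ?_
  have h : ∀ a b : ZMod 2, a * b = (if a ≠ 0 ∧ b ≠ 0 then (1 : ZMod 2) else 0) := by decide
  exact h (x i) (y i)

lemma ip_comm (x y : Fin n → ZMod 2) : ip x y = ip y x := by
  simp [ip, mul_comm]

lemma ip_add_left (x y z : Fin n → ZMod 2) : ip (x + y) z = ip x z + ip y z := by
  simp [ip, add_mul, Finset.sum_add_distrib]

lemma ip_add_right (x y z : Fin n → ZMod 2) : ip x (y + z) = ip x y + ip x z := by
  simp [ip, mul_add, Finset.sum_add_distrib]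

lemma ic_even_of_ip_zero {x y : Fin n → ZMod 2} (h : ip x y = 0) : 2 ∣ ic x y := by
  rw [ip_eq_ic] at h
  exact (ZMod.natCast_eq_zero_iff _ 2).mp h

lemma ip_zero_of_ic_even {x y : Fin n → ZMod 2} (h : 2 ∣ ic x y) : ip x y = 0 := by
  rw [ip_eq_ic]
  exact (ZMod.natCast_eq_zero_iff _ 2).mpr h

lemma wt_add_de {x y : Fin n → ZMod 2} (hx : 4 ∣ wt x) (hy : 4 ∣ wt y)
    (h : ip x y = 0) : 4 ∣ wt (x + y) := by
  have h1 := wt_add_ic x y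
  have h2 := ic_even_of_ip_zero h
  omega

lemma ip_zero_of_de {x y : Fin n → ZMod 2} (hx : 4 ∣ wt x) (hy : 4 ∣ wt y)
    (hxy : 4 ∣ wt (x + y)) : ip x y = 0 := by
  have h1 := wt_add_ic x y
  refine ip_zero_of_ic_even ?_
  omega

lemma ic_four_of_te {x y : Fin n → ZMod 2} (hx : 8 ∣ wt x) (hy : 8 ∣ wt y)
    (hxy : 8 ∣ wt (x + y)) : 4 ∣ ic x y := by
  have h1 := wt_add_ic x y
  omega

/-- Decidable form of `supp x ⊆ supp α`. -/
def Wp (α x : Fin n → ZMod 2) : Prop := ∀ i, x i ≠ 0 → α i ≠ 0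

lemma wp_iff (α x : Fin n → ZMod 2) : Wp α x ↔ supp x ⊆ supp α := by
  constructor
  · intro h i hi; exact h i hi
  · intro h i hi; exact h hi

lemma wp_zero (α : Fin n → ZMod 2) : Wp α 0 := by intro i hi; simp at hi

lemma wp_add {α x y : Fin n → ZMod 2} (hx : Wp α x) (hy : Wp α y) : Wp α (x + y) := by
  intro i hi
  by_cases h : x i = 0
  · exact hy i (by simpa [h] using hi)
  · exact hx i h

/-- The pointwise product with `α`. -/
def pmul (α x : Fin n → ZMod 2) : Fin n → ZMod 2 := fun i => α i * x i

lemma wp_pmul (α x : Fin n → ZMod 2) : Wp α (pmul α x) := by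
  intro i hi
  simp only [pmul, ne_eq] at hi
  intro h0
  exact hi (by simp [h0])

lemma wt_pmul (α x : Fin n → ZMod 2) : wt (pmul α x) = ic α x := by
  unfold wt ic pmul
  congr 1
  apply Finset.filter_congr
  intro i _
  have h : ∀ a b : ZMod 2, (a * b ≠ 0) ↔ (a ≠ 0 ∧ b ≠ 0) := by decide
  simpa using h (α i) (x i)

lemma ip_pmul_eq_tc (α x y : Fin n → ZMod 2) :
    ip (pmul α x) y = ((tc α x y : ℕ) : ZMod 2) := by
  rw [tc_eq_sum]
  push_cast
  refine Finset.sum_congr rfl fun i _ => ?_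
  have h : ∀ a b c : ZMod 2, (a * b) * c = (if a ≠ 0 ∧ b ≠ 0 ∧ c ≠ 0 then (1 : ZMod 2) else 0) := by
    decide
  exact h (α i) (x i) (y i)

lemma ip_wp {α x y : Fin n → ZMod 2} (hx : Wp α x) : ip x (pmul α y) = ip x y := by
  unfold ip pmul
  refine Finset.sum_congr rfl fun i _ => ?_
  by_cases h : x i = 0
  · simp [h]
  · have hα : α i ≠ 0 := hx i h
    have : α i = 1 := by
      have : ∀ a : ZMod 2, a ≠ 0 → a = 1 := by decide
      exact this _ hα
    simp [this]

lemma ip_self_wp {α x : Fin n → ZMod 2} (hx : Wp α x) :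
    ip x α = ((wt x : ℕ) : ZMod 2) := by
  rw [natCast_wt]
  unfold ip
  refine Finset.sum_congr rfl fun i _ => ?_
  by_cases h : x i = 0
  · simp [h]
  · have hα : α i ≠ 0 := hx i h
    have : α i = 1 := by
      have : ∀ a : ZMod 2, a ≠ 0 → a = 1 := by decide
      exact this _ hα
    simp [this]

lemma wt_le_wp {α x : Fin n → ZMod 2} (hx : Wp α x) : wt x ≤ wt α := by
  apply Finset.card_le_card
  intro i hi
  simp only [Finset.mem_filter, Finset.mem_univ, true_and] at *
  exact hx i hi

/-! ### The perp submodule -/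

/-- `perpWrt` as a submodule. -/
def perpSub (α : Fin n → ZMod 2) (B : Submodule (ZMod 2) (Fin n → ZMod 2)) :
    Submodule (ZMod 2) (Fin n → ZMod 2) where
  carrier := {x | Wp α x ∧ ∀ h ∈ B, ip x h = 0}
  zero_mem' := ⟨wp_zero α, fun h _ => by simp [ip]⟩
  add_mem' := by
    rintro x y ⟨hx1, hx2⟩ ⟨hy1, hy2⟩
    exact ⟨wp_add hx1 hy1, fun h hh => by rw [ip_add_left, hx2 h hh, hy2 h hh, add_zero]⟩
  smul_mem' := by
    intro c x hx
    have hc : c = 0 ∨ c = 1 := by revert c; decide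
    rcases hc with rfl | rfl
    · simpa using (⟨wp_zero α, fun h _ => by simp [ip]⟩ :
        Wp α 0 ∧ ∀ h ∈ B, ip 0 h = 0)
    · simpa using hx

lemma mem_perpSub {α : Fin n → ZMod 2} {B : Submodule (ZMod 2) (Fin n → ZMod 2)}
    {x : Fin n → ZMod 2} :
    x ∈ perpSub α B ↔ Wp α x ∧ ∀ h ∈ B, ip x h = 0 := Iff.rfl

lemma coe_perpSub (α : Fin n → ZMod 2) (B : Submodule (ZMod 2) (Fin n → ZMod 2)) :
    (perpSub α B : Set (Fin n → ZMod 2)) = perpWrt α (B : Set (Fin n → ZMod 2)) := by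
  ext x
  simp only [SetLike.mem_coe, mem_perpSub, perpWrt, Set.mem_setOf_eq, wp_iff]

/-! ### Gaussian integer character sums -/

local notation "G" => GaussianInt

/-- The imaginary unit. -/
def gi : G := ⟨0, 1⟩

/-- The sign character of `ZMod 2`. -/
def χ (t : ZMod 2) : G := if t = 0 then 1 else -1

/-- `i^t`. -/
def ψ (t : ZMod 2) : G := if t = 0 then 1 else gi

lemma χ_add (a b : ZMod 2) : χ (a + b) = χ a * χ b := by
  revert a b; decide

lemma χ_zero : χ (0 : ZMod 2) = 1 := rfl

lemma χ_sum {ι : Type*} (s : Finset ι) (f : ι → ZMod 2) :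
    χ (∑ i ∈ s, f i) = ∏ i ∈ s, χ (f i) := by
  classical
  induction s using Finset.cons_induction with
  | empty => simp [χ_zero]
  | cons a s ha ih => rw [Finset.sum_cons, Finset.prod_cons, χ_add, ih]

lemma gi_pow_wt (x : Fin n → ZMod 2) : gi ^ wt x = ∏ i, ψ (x i) := by
  rw [wt_eq_sum, ← Finset.prod_pow_eq_pow_sum]
  refine Finset.prod_congr rfl fun i _ => ?_
  by_cases h : x i = 0 <;> simp [ψ, h]

lemma gi_pow_four : gi ^ 4 = 1 := by decide

lemma gi_pow_of_4dvd {m : ℕ} (h : 4 ∣ m) : gi ^ m = 1 := by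
  obtain ⟨q, rfl⟩ := h
  rw [pow_mul, gi_pow_four, one_pow]

lemma gi_pow_of_mod2 {m : ℕ} (h2 : 2 ∣ m) (h4 : ¬ 4 ∣ m) : gi ^ m = -1 := by
  obtain ⟨q, rfl⟩ := h2
  have hq : ¬ 2 ∣ q := fun ⟨r, hr⟩ => h4 ⟨r, by omega⟩
  obtain ⟨r, hr⟩ := Nat.odd_iff.mpr (Nat.two_dvd_ne_zero.mp hq)
  have : 2 * q = 4 * r + 2 := by omega
  rw [this, pow_add, pow_mul, gi_pow_four, one_pow, one_mul]
  decide


/-- The finset of elements of a submodule. -/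
noncomputable def msFin (B : Submodule (ZMod 2) (Fin n → ZMod 2)) :
    Finset (Fin n → ZMod 2) := Finset.univ.filter (· ∈ B)

lemma mem_msFin {B : Submodule (ZMod 2) (Fin n → ZMod 2)} {x : Fin n → ZMod 2} :
    x ∈ msFin B ↔ x ∈ B := by simp [msFin]

lemma msFin_card_pos (B : Submodule (ZMod 2) (Fin n → ZMod 2)) : 0 < (msFin B).card :=
  Finset.card_pos.mpr ⟨0, mem_msFin.mpr B.zero_mem⟩

/-- Adding a vector to itself gives zero. -/
lemma addself (v : Fin n → ZMod 2) : v + v = 0 := by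
  funext i
  simp only [Pi.add_apply, Pi.zero_apply]
  have : ∀ a : ZMod 2, a + a = 0 := by decide
  exact this (v i)

/-- Character orthogonality. -/
lemma sum_chi (B : Submodule (ZMod 2) (Fin n → ZMod 2)) (x : Fin n → ZMod 2) :
    ∑ y ∈ msFin B, χ (ip x y) =
      if (∀ y ∈ B, ip x y = 0) then ((msFin B).card : G) else 0 := by
  split
  · next h =>
      rw [Finset.sum_congr rfl (fun y hy => by rw [h y (mem_msFin.mp hy), χ_zero])]
      simp
  · next h =>
      push_neg at h
      obtain ⟨y0, hy0B, hy0⟩ := h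
      set S := ∑ y ∈ msFin B, χ (ip x y) with hS
      have hbij : ∑ y ∈ msFin B, χ (ip x (y + y0)) = S := by
        rw [hS]
        apply Finset.sum_equiv (Equiv.addRight y0)
        · intro a
          simp only [mem_msFin, Equiv.coe_addRight]
          constructor
          · intro ha; exact B.add_mem ha hy0B
          · intro ha
            have := B.add_mem ha hy0B
            rwa [add_assoc, addself, add_zero] at this
        · intro a _
          rfl
      have hχ : ∀ y, χ (ip x (y + y0)) = - χ (ip x y) := by
        intro y
        rw [ip_add_right, χ_add]
        have hneg : χ (ip x y0) = -1 := by
          unfold χ; rw [if_neg hy0]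
        rw [hneg]; ring
      have hSneg : S = -S := by
        calc S = ∑ y ∈ msFin B, χ (ip x (y + y0)) := hbij.symm
        _ = ∑ y ∈ msFin B, - χ (ip x y) := Finset.sum_congr rfl fun y _ => hχ y
        _ = -S := by rw [hS, ← Finset.sum_neg_distrib]
      have h2 : S + S = 0 := by linear_combination hSneg
      exact add_self_eq_zero.mp h2

/-- The finset of vectors supported in `supp α`. -/
def wFin (α : Fin n → ZMod 2) : Finset (Fin n → ZMod 2) :=
  Finset.univ.filter (fun x => ∀ i, x i ≠ 0 → α i ≠ 0)

lemma mem_wFin {α x : Fin n → ZMod 2} : x ∈ wFin α ↔ Wp α x := by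
  simp [wFin, Wp]

/-- The inner character sum. -/
lemma inner_sum (α y : Fin n → ZMod 2) (hy : Wp α y) (k : ℕ)
    (hm : wt α = 8 * k) (hw : 4 ∣ wt y) :
    ∑ x ∈ wFin α, gi ^ wt x * χ (ip x y) = (16 : G) ^ k := by
  set h : Fin n → ZMod 2 → G := fun j t =>
    if α j = 0 then (if t = 0 then 1 else 0) else ψ t * χ (t * y j) with hdef
  have claimA : ∀ x : Fin n → ZMod 2,
      ∏ j, h j (x j) = if x ∈ wFin α then gi ^ wt x * χ (ip x y) else 0 := by
    intro x
    split
    · next hx =>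
        have hx' : Wp α x := mem_wFin.mp hx
        rw [gi_pow_wt, ip, χ_sum, ← Finset.prod_mul_distrib]
        refine Finset.prod_congr rfl fun j _ => ?_
        by_cases hαj : α j = 0
        · have hxj : x j = 0 := by
            by_contra hc
            exact hx' j hc hαj
          simp [hdef, hαj, hxj, ψ, χ_zero]
        · simp [hdef, hαj]
    · next hx =>
        have hx' : ¬ Wp α x := fun hc => hx (mem_wFin.mpr hc)
        unfold Wp at hx'
        push_neg at hx'
        obtain ⟨j, hxj, hαj⟩ := hx'
        refine Finset.prod_eq_zero (Finset.mem_univ j) ?_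
        simp [hdef, hαj, hxj]
  have claimB : ∑ x : Fin n → ZMod 2, ∏ j, h j (x j) = ∏ j, ∑ t : ZMod 2, h j t :=
    (Fintype.prod_sum h).symm
  have claimC : ∀ j, ∑ t : ZMod 2, h j t = if α j = 0 then 1 else 1 + gi * χ (y j) := by
    intro j
    have hsum : ∀ f : ZMod 2 → G, ∑ t : ZMod 2, f t = f 0 + f 1 := by
      intro f
      rw [show (Finset.univ : Finset (ZMod 2)) = {0, 1} from rfl,
        Finset.sum_insert (by decide), Finset.sum_singleton]
    rw [hsum]
    by_cases hαj : α j = 0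
    · simp [hdef, hαj]
    · simp [hdef, hαj, ψ, χ_zero]
  have lhs_eq : ∑ x ∈ wFin α, gi ^ wt x * χ (ip x y) = ∑ x : Fin n → ZMod 2, ∏ j, h j (x j) := by
    rw [Finset.sum_congr rfl (fun x _ => (claimA x))]
    rw [Finset.sum_ite_mem, Finset.univ_inter]
  rw [lhs_eq, claimB, Finset.prod_congr rfl (fun j _ => claimC j)]
  -- now compute the product
  have : ∏ j, (if α j = 0 then 1 else 1 + gi * χ (y j)) =
      ∏ j ∈ Finset.univ.filter (fun j => α j ≠ 0), (1 + gi * χ (y j)) := by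
    rw [Finset.prod_filter]
    refine Finset.prod_congr rfl fun j _ => ?_
    by_cases hαj : α j = 0 <;> simp [hαj]
  rw [this]
  set Sf := Finset.univ.filter (fun j => α j ≠ 0) with hSf
  have hsplit := Finset.prod_filter_mul_prod_filter_not Sf (fun j => y j = 0)
    (fun j => 1 + gi * χ (y j))
  rw [← hsplit]
  have hc1 : ∀ j ∈ Sf.filter (fun j => y j = 0), 1 + gi * χ (y j) = 1 + gi := by
    intro j hj
    have := (Finset.mem_filter.mp hj).2
    simp [χ, this]
  have hc2 : ∀ j ∈ Sf.filter (fun j => ¬ y j = 0), 1 + gi * χ (y j) = 1 - gi := by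
    intro j hj
    have := (Finset.mem_filter.mp hj).2
    simp [χ, this]
    ring
  rw [Finset.prod_congr rfl hc1, Finset.prod_congr rfl hc2, Finset.prod_const,
    Finset.prod_const]
  have hcard2 : (Sf.filter (fun j => ¬ y j = 0)).card = wt y := by
    unfold wt
    congr 1
    ext j
    simp only [hSf, Finset.mem_filter, Finset.mem_univ, true_and, ne_eq]
    constructor
    · rintro ⟨_, hj⟩; exact hj
    · intro hj; exact ⟨hy j hj, hj⟩
  have hcardsum : (Sf.filter (fun j => y j = 0)).card +
      (Sf.filter (fun j => ¬ y j = 0)).card = wt α := by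
    rw [Finset.card_filter_add_card_filter_not]
    rfl
  obtain ⟨a, ha⟩ := hw
  have hale : a ≤ 2 * k := by
    have := wt_le_wp hy
    omega
  have hcard1 : (Sf.filter (fun j => y j = 0)).card = 4 * (2 * k - a) := by omega
  rw [hcard1, hcard2, ha]
  have h1 : ((1 : G) + gi) ^ 4 = -4 := by decide
  have h2 : ((1 : G) - gi) ^ 4 = -4 := by decide
  rw [pow_mul, pow_mul, h1, h2, ← pow_add]
  have : 2 * k - a + a = 2 * k := by omega
  rw [this, pow_mul]
  norm_num

/-- The main character sum identity. -/
lemma T_eq (α : Fin n → ZMod 2) (B : Submodule (ZMod 2) (Fin n → ZMod 2))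
    (hsupp : ∀ x ∈ B, Wp α x) (hde : ∀ x ∈ B, 4 ∣ wt x) (k : ℕ) (hm : wt α = 8 * k) :
    ∑ x ∈ msFin (perpSub α B), gi ^ wt x = (16 : G) ^ k := by
  set c : G := ((msFin B).card : G) with hc
  set T := ∑ x ∈ msFin (perpSub α B), gi ^ wt x with hT
  have step1 : ∑ x ∈ wFin α, gi ^ wt x * (∑ y ∈ msFin B, χ (ip x y))
      = ∑ x ∈ (wFin α).filter (fun x => ∀ y ∈ B, ip x y = 0), gi ^ wt x * c := by
    rw [Finset.sum_filter]
    refine Finset.sum_congr rfl fun x _ => ?_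
    rw [sum_chi]
    split <;> simp [hc]
  have hfe : (wFin α).filter (fun x => ∀ y ∈ B, ip x y = 0) = msFin (perpSub α B) := by
    ext x
    simp only [Finset.mem_filter, mem_wFin, mem_msFin, mem_perpSub]
  have step2 : ∑ x ∈ wFin α, gi ^ wt x * (∑ y ∈ msFin B, χ (ip x y))
      = ∑ y ∈ msFin B, ∑ x ∈ wFin α, gi ^ wt x * χ (ip x y) := by
    simp_rw [Finset.mul_sum]
    rw [Finset.sum_comm]
  have step3 : ∑ y ∈ msFin B, ∑ x ∈ wFin α, gi ^ wt x * χ (ip x y)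
      = c * (16 : G) ^ k := by
    rw [Finset.sum_congr rfl (fun y hy =>
      inner_sum α y (hsupp y (mem_msFin.mp hy)) k hm (hde y (mem_msFin.mp hy)))]
    rw [Finset.sum_const, nsmul_eq_mul, hc]
  have hTc : T * c = c * (16 : G) ^ k := by
    rw [← step3, ← step2, step1, hfe, ← Finset.sum_mul]
  have hc0 : c ≠ 0 := by
    rw [hc]
    exact_mod_cast Nat.cast_ne_zero.mpr (msFin_card_pos B).ne'
  have := mul_left_cancel₀ hc0 (by rw [← hTc]; ring : c * T = c * (16 : G) ^ k)
  exact this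

lemma B_le_perp (α : Fin n → ZMod 2) (B : Submodule (ZMod 2) (Fin n → ZMod 2))
    (hsupp : ∀ x ∈ B, Wp α x) (hde : ∀ x ∈ B, 4 ∣ wt x) : B ≤ perpSub α B := by
  intro x hx
  refine mem_perpSub.mpr ⟨hsupp x hx, fun h hh => ?_⟩
  exact ip_zero_of_de (hde x hx) (hde h hh) (hde _ (B.add_mem hx hh))

set_option maxHeartbeats 1000000 in
/-- Key step: either `B` is self-dual or it can be extended. -/
lemma keystep (α : Fin n → ZMod 2) (B : Submodule (ZMod 2) (Fin n → ZMod 2))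
    (hα : α ∈ B) (hsupp : ∀ x ∈ B, Wp α x) (hde : ∀ x ∈ B, 4 ∣ wt x)
    (k : ℕ) (hm : wt α = 8 * k) (hne : perpSub α B ≠ B) :
    ∃ x, x ∈ perpSub α B ∧ x ∉ B ∧ 4 ∣ wt x := by
  by_contra hcon
  push_neg at hcon
  have hle : B ≤ perpSub α B := B_le_perp α B hsupp hde
  have hsub : msFin B ⊆ msFin (perpSub α B) :=
    fun x hx => mem_msFin.mpr (hle (mem_msFin.mp hx))
  have hT := T_eq α B hsupp hde k hm
  rw [← Finset.sum_sdiff hsub] at hT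
  have hB1 : ∀ x ∈ msFin B, gi ^ wt x = 1 :=
    fun x hx => gi_pow_of_4dvd (hde x (mem_msFin.mp hx))
  have hD1 : ∀ x ∈ msFin (perpSub α B) \ msFin B, gi ^ wt x = -1 := by
    intro x hx
    rw [Finset.mem_sdiff, mem_msFin, mem_msFin] at hx
    obtain ⟨hxp, hxB⟩ := hx
    have h2 : 2 ∣ wt x := by
      have hip : ip x α = 0 := (mem_perpSub.mp hxp).2 α hα
      rw [ip_self_wp (mem_perpSub.mp hxp).1] at hip
      exact (ZMod.natCast_eq_zero_iff _ 2).mp hip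
    exact gi_pow_of_mod2 h2 (hcon x hxp hxB)
  rw [Finset.sum_congr rfl hB1, Finset.sum_congr rfl hD1, Finset.sum_const,
    Finset.sum_const] at hT
  set b := (msFin B).card with hb
  set d := (msFin (perpSub α B) \ msFin B).card with hd
  have hcast : ((16 : ℤ) ^ k : ℤ) = (b : ℤ) - (d : ℤ) := by
    have : ((((16 : ℤ) ^ k : ℤ)) : G) = (((b : ℤ) - (d : ℤ) : ℤ) : G) := by
      push_cast
      rw [← hT]
      push_cast
      ring
    exact_mod_cast this
  -- Lagrange
  have hdvd : Nat.card B ∣ Nat.card (perpSub α B) :=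
    AddSubgroup.card_dvd_of_le
      (show B.toAddSubgroup ≤ (perpSub α B).toAddSubgroup from hle)
  have hcb : Nat.card B = b := by
    rw [hb, msFin, Nat.card_eq_fintype_card, Fintype.card_subtype]
  have hcp : Nat.card (perpSub α B) = b + d := by
    rw [Nat.card_eq_fintype_card, Fintype.card_subtype]
    have h2 := Finset.card_sdiff_add_card_eq_card hsub
    have h3 : (Finset.univ.filter (fun x => x ∈ perpSub α B)) = msFin (perpSub α B) := rfl
    rw [h3]
    omega
  have h16 : (1 : ℤ) ≤ 16 ^ k := one_le_pow₀ (by norm_num)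
  have hdlt : d < b := by omega
  have hbd : b ∣ b + d := by
    have h4 := hdvd
    rw [hcb, hcp] at h4
    exact h4
  have hbd' : b ∣ d := (Nat.dvd_add_right dvd_rfl).mp hbd
  rcases Nat.eq_zero_or_pos d with hd0 | hdpos
  · apply hne
    have hempty : msFin (perpSub α B) \ msFin B = ∅ := Finset.card_eq_zero.mp (hd ▸ hd0)
    have heq : msFin (perpSub α B) = msFin B :=
      Finset.Subset.antisymm (fun x hx => by
        by_contra hxB
        exact absurd (Finset.mem_sdiff.mpr ⟨hx, hxB⟩) (by rw [hempty]; simp)) hsub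
    ext x
    rw [← mem_msFin, ← mem_msFin, heq]
  · exact absurd (Nat.le_of_dvd hdpos hbd') (by omega)

/-- Membership in the sum with a span of a singleton over `ZMod 2`. -/
lemma mem_sup_span {B : Submodule (ZMod 2) (Fin n → ZMod 2)} {x z : Fin n → ZMod 2}
    (hz : z ∈ B ⊔ Submodule.span (ZMod 2) {x}) :
    ∃ b ∈ B, z = b ∨ z = b + x := by
  rw [Submodule.mem_sup] at hz
  obtain ⟨b, hb, s, hs, rfl⟩ := hz
  rw [Submodule.mem_span_singleton] at hs
  obtain ⟨c, rfl⟩ := hs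
  have hc : c = 0 ∨ c = 1 := by revert c; decide
  rcases hc with rfl | rfl
  · exact ⟨b, hb, Or.inl (by simp)⟩
  · exact ⟨b, hb, Or.inr (by simp)⟩

/-- The extension procedure. -/
lemma extend (α : Fin n → ZMod 2) (k : ℕ) (hm : wt α = 8 * k) :
    ∀ (d : ℕ) (B : Submodule (ZMod 2) (Fin n → ZMod 2)),
    α ∈ B → (∀ x ∈ B, Wp α x) → (∀ x ∈ B, 4 ∣ wt x) →
    2 ^ n ≤ d + (msFin B).card →
    ∃ E : Submodule (ZMod 2) (Fin n → ZMod 2), B ≤ E ∧ α ∈ E ∧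
      (∀ x ∈ E, Wp α x) ∧ (∀ x ∈ E, 4 ∣ wt x) ∧ perpSub α E = E := by
  intro d
  induction d with
  | zero =>
    intro B hα hsupp hde hcard
    refine ⟨B, le_refl B, hα, hsupp, hde, ?_⟩
    have hcard2 : Fintype.card (Fin n → ZMod 2) = 2 ^ n := by
      rw [Fintype.card_fun]
      simp
    have huniv : msFin B = Finset.univ := by
      apply Finset.eq_univ_of_card
      have hle := Finset.card_le_univ (msFin B)
      rw [hcard2] at hle
      rw [hcard2]
      exact le_antisymm hle (by simpa using hcard)
    have hall : ∀ x : Fin n → ZMod 2, x ∈ B := by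
      intro x
      rw [← mem_msFin, huniv]
      exact Finset.mem_univ x
    apply le_antisymm
    · intro x _
      exact hall x
    · exact B_le_perp α B hsupp hde
  | succ d ih =>
    intro B hα hsupp hde hcard
    by_cases heq : perpSub α B = B
    · exact ⟨B, le_refl B, hα, hsupp, hde, heq⟩
    · obtain ⟨x, hxp, hxB, hx4⟩ := keystep α B hα hsupp hde k hm heq
      obtain ⟨hxw, hxo⟩ := mem_perpSub.mp hxp
      set B' := B ⊔ Submodule.span (ZMod 2) {x} with hB'
      have hBB' : B ≤ B' := le_sup_left
      have hxB' : x ∈ B' := (le_sup_right : Submodule.span (ZMod 2) {x} ≤ B') (Submodule.mem_span_singleton_self x)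
      have hsupp' : ∀ z ∈ B', Wp α z := by
        intro z hz
        obtain ⟨b, hb, hzb | hzb⟩ := mem_sup_span hz
        · rw [hzb]; exact hsupp b hb
        · rw [hzb]; exact wp_add (hsupp b hb) hxw
      have hde' : ∀ z ∈ B', 4 ∣ wt z := by
        intro z hz
        obtain ⟨b, hb, hzb | hzb⟩ := mem_sup_span hz
        · rw [hzb]; exact hde b hb
        · rw [hzb]
          exact wt_add_de (hde b hb) hx4 (by rw [ip_comm]; exact hxo b hb)
      have hα' : α ∈ B' := hBB' hα
      have hcard' : 2 ^ n ≤ d + (msFin B').card := by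
        have hss : msFin B ⊂ msFin B' := by
          refine Finset.ssubset_iff_of_subset
            (fun z hz => mem_msFin.mpr (hBB' (mem_msFin.mp hz))) |>.mpr ?_
          exact ⟨x, mem_msFin.mpr hxB', fun hc => hxB (mem_msFin.mp hc)⟩
        have hlt := Finset.card_lt_card hss
        calc 2 ^ n ≤ d + 1 + (msFin B).card := hcard
        _ ≤ d + (msFin B').card := by omega
      obtain ⟨E, hBE, hαE, hs, hd4, hperp⟩ := ih B' hα' hsupp' hde' hcard'
      exact ⟨E, le_trans hBB' hBE, hαE, hs, hd4, hperp⟩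

/-- Pointwise multiplication by `α` as a linear map. -/
def mulLin (α : Fin n → ZMod 2) : (Fin n → ZMod 2) →ₗ[ZMod 2] (Fin n → ZMod 2) where
  toFun := pmul α
  map_add' x y := by funext i; simp [pmul, mul_add]
  map_smul' c x := by funext i; simp [pmul, smul_eq_mul]; ring

lemma pmul_self (α : Fin n → ZMod 2) : pmul α α = α := by
  funext i
  have h : ∀ a : ZMod 2, a * a = a := by decide
  exact h (α i)

/-- The double dual of a submodule is contained in it. -/
lemma bidual_le (D : Submodule (ZMod 2) (Fin n → ZMod 2)) :
    dualCode (dualCode (D : Set (Fin n → ZMod 2))) ⊆ (D : Set (Fin n → ZMod 2)) := by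
  intro γ hγ
  rw [SetLike.mem_coe]
  rw [← Subspace.forall_mem_dualAnnihilator_apply_eq_zero_iff D γ]
  intro φ hφ
  set x : Fin n → ZMod 2 := fun i => φ (fun j => if i = j then 1 else 0) with hx
  have hrep : ∀ y : Fin n → ZMod 2, φ y = ip y x := by
    intro y
    conv_lhs => rw [pi_eq_sum_univ y]
    rw [map_sum]
    unfold ip
    refine Finset.sum_congr rfl fun i _ => ?_
    rw [map_smul, smul_eq_mul, hx]
  have hxdual : x ∈ dualCode (D : Set (Fin n → ZMod 2)) := by
    intro δ hδ
    rw [ip_comm, ← hrep]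
    exact (Submodule.mem_dualAnnihilator φ).mp hφ δ hδ
  rw [hrep]
  exact hγ x hxdual

end Stmt6Aux

open Stmt6Aux in
theorem stmt6 {n : ℕ} (h16 : 16 ∣ n) (D : Submodule (ZMod 2) (Fin n → ZMod 2))
    (hte : ∀ x ∈ D, 8 ∣ wt x)
    (hone : (fun _ => (1 : ZMod 2) : Fin n → ZMod 2) ∈ D) :
    (∀ γ ∈ dualCode (D : Set (Fin n → ZMod 2)), 2 ∣ wt γ) ∧
    (∀ γ ∈ dualCode (dualCode (D : Set (Fin n → ZMod 2))), 8 ∣ wt γ) ∧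
    dualCode (dualCode (D : Set (Fin n → ZMod 2))) ⊆ dualCode (D : Set (Fin n → ZMod 2)) ∧
    (∀ α ∈ dualCode (dualCode (D : Set (Fin n → ZMod 2))),
      ∃ E : Submodule (ZMod 2) (Fin n → ZMod 2),
        (E : Set (Fin n → ZMod 2)) ⊆
          {γ ∈ dualCode (D : Set (Fin n → ZMod 2)) | supp γ ⊆ supp α} ∧
        (∀ x ∈ E, 4 ∣ wt x) ∧ selfDualWrt α (E : Set (Fin n → ZMod 2))) := by
  have hDd : (D : Set (Fin n → ZMod 2)) ⊆ dualCode (D : Set (Fin n → ZMod 2)) := by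
    intro x hx y hy
    refine ip_zero_of_de ?_ ?_ ?_
    · exact dvd_trans (by norm_num) (hte x hx)
    · exact dvd_trans (by norm_num) (hte y hy)
    · exact dvd_trans (by norm_num) (hte _ (D.add_mem hx hy))
  have hbid := bidual_le D
  refine ⟨?_, ?_, ?_, ?_⟩
  · -- evenness
    intro γ hγ
    have h1 := hγ _ hone
    have h2 : ip γ (fun _ => (1 : ZMod 2)) = ((wt γ : ℕ) : ZMod 2) := by
      rw [natCast_wt]
      unfold ip
      simp
    rw [h2] at h1
    exact (ZMod.natCast_eq_zero_iff _ 2).mp h1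
  · intro γ hγ
    exact hte γ (hbid hγ)
  · intro γ hγ y hy
    exact hγ y (hDd hy)
  · intro α hα
    have hαD : α ∈ D := hbid hα
    obtain ⟨k, hk⟩ := hte α hαD
    set B0 : Submodule (ZMod 2) (Fin n → ZMod 2) := D.map (mulLin α) with hB0
    have hmemB0 : ∀ z, z ∈ B0 ↔ ∃ y ∈ D, pmul α y = z := by
      intro z
      rw [hB0, Submodule.mem_map]
      rfl
    have hα0 : α ∈ B0 := (hmemB0 α).mpr ⟨α, hαD, pmul_self α⟩
    have hsupp0 : ∀ x ∈ B0, Wp α x := by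
      intro x hx
      obtain ⟨y, _, rfl⟩ := (hmemB0 x).mp hx
      exact wp_pmul α y
    have hde0 : ∀ x ∈ B0, 4 ∣ wt x := by
      intro x hx
      obtain ⟨y, hy, rfl⟩ := (hmemB0 x).mp hx
      rw [wt_pmul]
      exact ic_four_of_te (hte α hαD) (hte y hy) (hte _ (D.add_mem hαD hy))
    obtain ⟨E, hB0E, hαE, hsE, hdE, hperpE⟩ :=
      extend α k hk (2 ^ n) B0 hα0 hsupp0 hde0 (Nat.le_add_right _ _)
    have hEC : (E : Set (Fin n → ZMod 2)) ⊆ dualCode (D : Set (Fin n → ZMod 2)) := by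
      intro x hx y hy
      have hxE : x ∈ E := hx
      have hxperp : x ∈ perpSub α E := by rw [hperpE]; exact hxE
      have h1 : ip x (pmul α y) = 0 :=
        (mem_perpSub.mp hxperp).2 _ (hB0E ((hmemB0 _).mpr ⟨y, hy, rfl⟩))
      rw [← ip_wp (hsE x hxE)]
      exact h1
    refine ⟨E, ?_, ?_, ?_, ?_⟩
    · intro x hx
      exact ⟨hEC hx, (wp_iff α x).mp (hsE x hx)⟩
    · exact hdE
    · -- codeSupp
      apply Set.Subset.antisymm
      · intro i hi
        rw [codeSupp] at hi
        obtain ⟨s, ⟨x, rfl⟩, hs⟩ := hi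
        simp only [Set.mem_iUnion] at hs
        obtain ⟨hxE, hi⟩ := hs
        exact (wp_iff α x).mp (hsE x hxE) hi
      · intro i hi
        rw [codeSupp]
        exact Set.mem_biUnion (by exact hαE) hi
    · rw [← coe_perpSub, hperpE]
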